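/- Let D be a filter on a set A, and let I be a directed partial order in which every subset of cardinality at most 2^{|A|} has an upper bound. Let ⟨f_t : t ∈ I⟩ be a family of functions from A to the ordinals which is ≤_D-increasing (s ≤_I t implies f_s ≤_D f_t), and suppose g is a ≤_D-least upper bound of {f_t : t ∈ I}. Then g is a ≤_D-exact upper bound: for every h : A → Ord with h(a) < max(g(a),1) for all a ∈ A, there exists t ∈ I such that {a ∈ A : h(a) < max(f_t(a),1)} ∈ D. -/
import Mathlib


universe uA uI

/-- If `I` is a directed partial order in which every subset of size `≤ 2^{|A|}` has an upper
bound, `⟨f_t : t ∈ I⟩` is `≤_D`-increasing, and `g` is a `≤_D`-least upper bound of the family,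
then `g` is a `≤_D`-exact upper bound. -/
theorem stmt5 {A : Type uA} {I : Type uI} [PartialOrder I] (D : Filter A)
    (hdir : ∀ S : Set I, Cardinal.lift.{uA} (Cardinal.mk S) ≤
        Cardinal.lift.{uI} ((2 : Cardinal) ^ Cardinal.mk A) →
      ∃ t : I, ∀ s ∈ S, s ≤ t)
    (f : I → A → Ordinal)
    (hinc : ∀ s t : I, s ≤ t → {a : A | f s a ≤ f t a} ∈ D)
    (g : A → Ordinal)
    (hub : ∀ t : I, {a : A | f t a ≤ g a} ∈ D)
    (hlub : ∀ g' : A → Ordinal, (∀ t : I, {a : A | f t a ≤ g' a} ∈ D) →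
      {a : A | g a ≤ g' a} ∈ D) :
    ∀ h : A → Ordinal, (∀ a : A, h a < max (g a) 1) →
      ∃ t : I, {a : A | h a < max (f t a) 1} ∈ D := by
  classical
  intro h hh
  by_contra hcon
  push_neg at hcon
  obtain ⟨t0, -⟩ := hdir ∅ (by simp)
  set X : I → Set A := fun t => {a | h a < max (f t a) 1} with hX
  let c : Set A → I := fun Y => if hY : ∃ t, X t = Y then hY.choose else t0
  obtain ⟨T, hT⟩ := hdir (Set.range c) (by
    calc Cardinal.lift.{uA} (Cardinal.mk (Set.range c))
        ≤ Cardinal.lift.{uI} (Cardinal.mk (Set A)) := Cardinal.mk_range_le_lift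
      _ = Cardinal.lift.{uI} (2 ^ Cardinal.mk A) := by rw [Cardinal.mk_set])
  have key : ∀ t : I, {a | a ∈ X t → a ∈ X T} ∈ D := by
    intro t
    have hex : ∃ s, X s = X t := ⟨t, rfl⟩
    have hct : X (c (X t)) = X t := by
      simp only [c, dif_pos hex]; exact hex.choose_spec
    have hle : c (X t) ≤ T := hT _ ⟨X t, rfl⟩
    filter_upwards [hinc _ _ hle] with a ha hat
    rw [← hct] at hat
    simp only [hX, Set.mem_setOf_eq] at hat ⊢
    exact lt_of_lt_of_le hat (max_le_max ha le_rfl)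
  let g' : A → Ordinal := fun a => if a ∈ X T then g a else h a
  have hub' : ∀ t, {a | f t a ≤ g' a} ∈ D := by
    intro t
    filter_upwards [hub t, key t] with a hag himp
    by_cases haT : a ∈ X T
    · simpa [g', haT] using hag
    · have hat : a ∉ X t := fun hx => haT (himp hx)
      simp only [hX, Set.mem_setOf_eq, not_lt] at hat
      simp only [g', if_neg haT, Set.mem_setOf_eq]
      exact le_trans (le_max_left _ _) hat
  have hgle := hlub g' hub'
  refine hcon T ?_
  show X T ∈ D
  filter_upwards [hgle] with a hga
  by_contra haT
  simp only [Set.mem_setOf_eq, g', if_neg haT] at hga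
  have h1 : 1 ≤ h a := by
    have : ¬ (h a < max (f T a) 1) := haT
    exact le_trans (le_max_right _ _) (not_lt.mp this)
  have hha := hh a
  rcases le_or_gt 1 (g a) with hg1 | hg1
  · rw [max_eq_left hg1] at hha
    exact absurd (lt_of_le_of_lt hga hha) (lt_irrefl _)
  · rw [max_eq_right hg1.le] at hha
    exact absurd (lt_of_le_of_lt h1 hha) (lt_irrefl _)
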